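/- Let G be the amalgamated product defined in the context. Then G is generated by three elements: there exists a set S ⊆ G with |S| ≤ 3 whose generated subgroup is all of G. -/

import Mathlib

/-- A group is Obraztsov if it is 2-generated, simple, complete (trivial center and all
automorphisms inner), torsion-free, and every nontrivial proper subgroup is infinite cyclic. -/
def IsObraztsov (G : Type*) [Group G] : Prop :=
  (∃ a b : G, Subgroup.closure {a, b} = ⊤) ∧
  IsSimpleGroup G ∧
  Subgroup.center G = ⊥ ∧
  (∀ φ : G ≃* G, ∃ g : G, ∀ y : G, φ y = g * y * g⁻¹) ∧
  (∀ g : G, g ≠ 1 → ¬IsOfFinOrder g) ∧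
  (∀ K : Subgroup G, K ≠ ⊥ → K ≠ ⊤ → IsCyclic K ∧ Infinite K)

/-- `h` generates a maximal cyclic subgroup. -/
def IsMaxCyclicGen {H : Type*} [Group H] (h : H) : Prop :=
  ∀ w : H, Subgroup.zpowers h ≤ Subgroup.zpowers w →
    Subgroup.zpowers h = Subgroup.zpowers w

/-- `u i = (h i, 1) ∈ H i × ℤ`. -/
def amalgU {H : Bool → Type*} [∀ i, Group (H i)] (h : ∀ i, H i) (i : Bool) :
    H i × Multiplicative ℤ :=
  (h i, Multiplicative.ofAdd (1 : ℤ))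

/-- The homomorphism `ℤ → H i × ℤ` sending `1 ↦ u i`. -/
def amalgMap {H : Bool → Type*} [∀ i, Group (H i)] (h : ∀ i, H i) (i : Bool) :
    Multiplicative ℤ →* H i × Multiplicative ℤ :=
  zpowersHom _ (amalgU h i)

/-- The amalgamated free product `G = (H₁ × ℤ) ∗_{u₁ = u₂} (H₂ × ℤ)`. -/
abbrev Amalg (H : Bool → Type*) [∀ i, Group (H i)] (h : ∀ i, H i) : Type _ :=
  Monoid.PushoutI (amalgMap h)


open Subgroup Multiplicative

/-- Every element of `Multiplicative ℤ` is a power of `ofAdd 1`. -/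
lemma eq_pow_ofAdd_one (k : Multiplicative ℤ) :
    k = (ofAdd (1 : ℤ)) ^ (toAdd k) := by
  rw [← ofAdd_zsmul, smul_eq_mul, mul_one, ofAdd_toAdd]

/-- Lemma A: If `H` is simple with trivial center and `x ≠ 1`, `closure {x, y} = ⊤`, then
`H × ℤ` is generated by `(x, t)` and `(y, 1)`. -/
lemma lemA {H : Type*} [Group H] [IsSimpleGroup H]
    (hz : Subgroup.center H = ⊥) (x y : H) (hx1 : x ≠ 1)
    (hxy : Subgroup.closure {x, y} = ⊤) :
    Subgroup.closure {((x, ofAdd (1 : ℤ)) : H × Multiplicative ℤ),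
      ((y, (1 : Multiplicative ℤ)) : H × Multiplicative ℤ)} = ⊤ := by
  set t : Multiplicative ℤ := ofAdd (1 : ℤ)
  set K : Subgroup (H × Multiplicative ℤ) := Subgroup.closure {(x, t), (y, 1)} with hK
  have hxK : (x, t) ∈ K := Subgroup.subset_closure (by simp)
  have hyK : ((y, (1:Multiplicative ℤ))) ∈ K := Subgroup.subset_closure (by simp)
  -- projection onto H is surjective on K
  have hmap : K.map (MonoidHom.fst H (Multiplicative ℤ)) = ⊤ := by
    rw [hK, MonoidHom.map_closure]
    have : (MonoidHom.fst H (Multiplicative ℤ)) '' {(x, t), (y, 1)} = {x, y} := by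
      simp [Set.image_pair]
    rw [this, hxy]
  set N : Subgroup H := K.comap (MonoidHom.inl H (Multiplicative ℤ)) with hN
  have hNnormal : N.Normal := by
    constructor
    intro g hg a
    have ha : a ∈ K.map (MonoidHom.fst H (Multiplicative ℤ)) := by rw [hmap]; trivial
    obtain ⟨⟨a', s⟩, hk, hfst⟩ := ha
    simp only [MonoidHom.coe_fst] at hfst
    subst hfst
    have := K.mul_mem (K.mul_mem hk hg) (K.inv_mem hk)
    simpa [hN, Subgroup.mem_comap, MonoidHom.inl_apply, mul_assoc] using this
  rcases hNnormal.eq_bot_or_eq_top with hbot | htop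
  · -- then x, y commute, contradiction with trivial center
    exfalso
    have hc : x * y * x⁻¹ * y⁻¹ = 1 := by
      have hmem : ((x * y * x⁻¹ * y⁻¹, (1 : Multiplicative ℤ)) : H × Multiplicative ℤ) ∈ K := by
        have := K.mul_mem (K.mul_mem (K.mul_mem hxK hyK) (K.inv_mem hxK)) (K.inv_mem hyK)
        have he : ((x, t) * (y, 1) * (x, t)⁻¹ * (y, 1)⁻¹ : H × Multiplicative ℤ)
            = (x * y * x⁻¹ * y⁻¹, 1) := by
          ext <;> simp [mul_assoc]
        rwa [he] at this
      have : x * y * x⁻¹ * y⁻¹ ∈ N := hmem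
      rw [hbot] at this
      simpa using this
    have hcomm : x * y = y * x := by
      calc x * y = (x * y * x⁻¹ * y⁻¹) * (y * x) := by group
      _ = y * x := by rw [hc]; group
    -- x is central
    have hcent : ∀ g : H, g * x = x * g := by
      intro g
      have hg : g ∈ Subgroup.centralizer {x, y} := by
        have hle : Subgroup.closure {x, y} ≤ Subgroup.centralizer {x, y} := by
          rw [Subgroup.closure_le]
          intro s hs
          show s ∈ Subgroup.centralizer {x, y}
          rw [Subgroup.mem_centralizer_iff]
          intro z hz
          rcases hs with rfl | rfl <;> rcases hz with rfl | rfl <;>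
            simp_all [hcomm]
        exact hle (by rw [hxy]; trivial)
      exact (Subgroup.mem_centralizer_iff.mp hg x (by simp)).symm
    have : x ∈ Subgroup.center H := Subgroup.mem_center_iff.mpr hcent
    rw [hz] at this
    exact hx1 (by simpa using this)
  · -- N = ⊤ : all (g, 1) ∈ K, then (1, t) ∈ K, then K = ⊤
    have hH1 : ∀ g : H, ((g, (1 : Multiplicative ℤ)) : H × Multiplicative ℤ) ∈ K := by
      intro g
      have : g ∈ N := by rw [htop]; trivial
      exact this
    have ht : ((1, t) : H × Multiplicative ℤ) ∈ K := by
      have := K.mul_mem (K.inv_mem (hH1 x)) hxK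
      simpa using this
    rw [eq_top_iff]
    rintro ⟨g, s⟩ -
    have h2 : ((1, s) : H × Multiplicative ℤ) ∈ K := by
      have := K.zpow_mem ht (toAdd s)
      have he : (((1, t) : H × Multiplicative ℤ)) ^ (toAdd s) = (1, s) := by
        ext
        · simp
        · exact (eq_pow_ofAdd_one s).symm
      rwa [he] at this
    have := K.mul_mem (hH1 g) h2
    simpa using this

/-- Lemma B: an Obraztsov group is generated by a max cyclic generator and one more element. -/
lemma lemB {H : Type*} [Group H] (hObr : IsObraztsov H) (h : H) (hmax : IsMaxCyclicGen h) :
    h ≠ 1 ∧ ∃ b : H, Subgroup.closure {h, b} = ⊤ := by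
  obtain ⟨-, hsimple, hz, -, -, hsub⟩ := hObr
  haveI := hsimple
  have hnt : Nontrivial H := inferInstance
  have hne1 : h ≠ 1 := by
    rintro rfl
    obtain ⟨g, hg⟩ := exists_ne (1 : H)
    have : Subgroup.zpowers (1 : H) = Subgroup.zpowers g :=
      hmax g (by simp [Subgroup.zpowers_le])
    have : g ∈ Subgroup.zpowers (1 : H) := by rw [this]; exact Subgroup.mem_zpowers g
    simp only [Subgroup.zpowers_one_eq_bot, Subgroup.mem_bot] at this
    exact hg this
  refine ⟨hne1, ?_⟩
  have hnotall : Subgroup.zpowers h ≠ ⊤ := by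
    intro habs
    have hcomm : ∀ a b : H, a * b = b * a := by
      intro a b
      have ha : a ∈ Subgroup.zpowers h := by rw [habs]; trivial
      have hb : b ∈ Subgroup.zpowers h := by rw [habs]; trivial
      obtain ⟨m, rfl⟩ := ha
      obtain ⟨n, rfl⟩ := hb
      rw [← zpow_add, ← zpow_add, add_comm]
    have : Subgroup.center H = ⊤ := by
      rw [eq_top_iff]
      intro g _
      exact Subgroup.mem_center_iff.mpr fun a => hcomm a g
    rw [hz] at this
    obtain ⟨g, hg⟩ := exists_ne (1 : H)
    exact hg (by simpa using (this ▸ (Subgroup.mem_top g : g ∈ ⊤) : g ∈ (⊥ : Subgroup H)))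
  obtain ⟨b, hb⟩ : ∃ b : H, b ∉ Subgroup.zpowers h := by
    by_contra habs
    push_neg at habs
    exact hnotall (eq_top_iff.mpr fun g _ => habs g)
  refine ⟨b, ?_⟩
  by_contra hKtop
  set K : Subgroup H := Subgroup.closure {h, b} with hKdef
  have hhK : h ∈ K := Subgroup.subset_closure (by simp)
  have hbK : b ∈ K := Subgroup.subset_closure (by simp)
  have hKbot : K ≠ ⊥ := by
    intro habs
    have : b = 1 := by simpa [habs] using hbK
    exact hb (this ▸ Subgroup.one_mem _)
  obtain ⟨hcyc, -⟩ := hsub K hKbot hKtop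
  obtain ⟨⟨w, hwK⟩, hw⟩ := hcyc.exists_generator
  have hhw : h ∈ Subgroup.zpowers w := by
    obtain ⟨n, hn⟩ := hw ⟨h, hhK⟩
    exact ⟨n, congrArg Subtype.val hn⟩
  have heq : Subgroup.zpowers h = Subgroup.zpowers w :=
    hmax w (Subgroup.zpowers_le.mpr hhw)
  obtain ⟨m, hm⟩ := hw ⟨b, hbK⟩
  have : b ∈ Subgroup.zpowers w := ⟨m, congrArg Subtype.val hm⟩
  rw [← heq] at this
  exact hb this

/-- The amalgam `G` of two Obraztsov groups crossed with `ℤ`, amalgamated along `u₁ = u₂`,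
is generated by three elements. -/
theorem stmt_19 (H : Bool → Type*) [∀ i, Group (H i)]
    (hObr : ∀ i, IsObraztsov (H i))
    (h : ∀ i, H i) (hmax : ∀ i, IsMaxCyclicGen (h i)) :
    ∃ S : Finset (Amalg H h), S.card ≤ 3 ∧ Subgroup.closure (S : Set (Amalg H h)) = ⊤ := by
  classical
  choose hne1 b hb using fun i => lemB (hObr i) (h i) (hmax i)
  haveI : ∀ i, IsSimpleGroup (H i) := fun i => (hObr i).2.1
  set t : Multiplicative ℤ := ofAdd (1 : ℤ) with ht
  set g0 : Amalg H h := Monoid.PushoutI.base (amalgMap h) t with hg0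
  set g1 : Amalg H h := Monoid.PushoutI.of (φ := amalgMap h) true (b true, 1) with hg1
  set g2 : Amalg H h := Monoid.PushoutI.of (φ := amalgMap h) false (b false, 1) with hg2
  refine ⟨{g0, g1, g2}, ?_, ?_⟩
  · refine le_trans (Finset.card_insert_le _ _) (Nat.succ_le_succ ?_)
    refine le_trans (Finset.card_insert_le _ _) (Nat.succ_le_succ ?_)
    simp
  · set S : Set (Amalg H h) := (({g0, g1, g2} : Finset (Amalg H h)) : Set (Amalg H h)) with hS
    have hSmem0 : g0 ∈ Subgroup.closure S := Subgroup.subset_closure (by simp [hS])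
    have hSmem1 : g1 ∈ Subgroup.closure S := Subgroup.subset_closure (by simp [hS])
    have hSmem2 : g2 ∈ Subgroup.closure S := Subgroup.subset_closure (by simp [hS])
    have hbase : ∀ i : Bool, Monoid.PushoutI.of (φ := amalgMap h) i (h i, t) = g0 := by
      intro i
      have h1 : amalgMap h i t = (h i, t) := by
        simp [amalgMap, amalgU, zpowersHom_apply, ht]
      rw [hg0, ← h1, ← MonoidHom.comp_apply, Monoid.PushoutI.of_comp_eq_base]
    have key : ∀ (i : Bool) (g : H i × Multiplicative ℤ),
        Monoid.PushoutI.of (φ := amalgMap h) i g ∈ Subgroup.closure S := by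
      intro i g
      have htop := lemA ((hObr i).2.2.1) (h i) (b i) (hne1 i) (hb i)
      have hgmem : g ∈ Subgroup.closure {((h i, t) : H i × Multiplicative ℤ), (b i, 1)} := by
        rw [htop]; trivial
      have hmapmem :
          Monoid.PushoutI.of (φ := amalgMap h) i g ∈
            (Subgroup.closure {((h i, t) : H i × Multiplicative ℤ), (b i, 1)}).map
              (Monoid.PushoutI.of (φ := amalgMap h) i) :=
        Subgroup.mem_map_of_mem _ hgmem
      rw [MonoidHom.map_closure] at hmapmem
      refine Subgroup.closure_le (Subgroup.closure S) |>.mpr ?_ hmapmem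
      rw [Set.image_pair]
      rintro z (rfl | rfl)
      · rw [hbase i]; exact hSmem0
      · cases i
        · exact hSmem2
        · exact hSmem1
    rw [eq_top_iff]
    rintro g -
    induction g using Monoid.PushoutI.induction_on with
    | of i g => exact key i g
    | base k =>
      have : Monoid.PushoutI.base (amalgMap h) k = g0 ^ (toAdd k) := by
        rw [hg0, ← map_zpow, ← eq_pow_ofAdd_one]
      rw [this]
      exact Subgroup.zpow_mem _ hSmem0 _
    | mul x y hx hy => exact Subgroup.mul_mem _ hx hy
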